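/- Let f be a natural number, let ι be a finite set of indices with |ι| = 2f + 1, let F ⊆ ι with |F| ≤ f, and let t : ι → ℝ. Let m be the (f + 1)-th smallest value among the multiset {t i : i ∈ ι} (i.e., the entry at position f, zero-indexed, of the sorted-ascending list of these 2f + 1 values). Then there exists an index j ∈ ι with j ∉ F and m ≤ t j. -/

import Mathlib

/-- The trusted timestamp (the `(f+1)`-th smallest of `2f + 1` reported
timestamps, at most `f` of which come from faulty nodes) is bounded above
by some non-faulty node's timestamp. -/
theorem trusted_timestamp_upper {α : Type*} [DecidableEq α] (f : ℕ) (ι : Finset α)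
    (hι : ι.card = 2 * f + 1) (F : Finset α) (hFι : F ⊆ ι) (hF : F.card ≤ f)
    (t : α → ℝ)
    (m : ℝ) (hm : m = ((ι.val.map t).sort (· ≤ ·)).getD f 0) :
    ∃ j ∈ ι, j ∉ F ∧ m ≤ t j := by
  classical
  set l := ((ι.val.map t).sort (· ≤ ·)) with hl
  have hlen : l.length = 2 * f + 1 := by
    simp [hl, hι]
  have hsorted : l.Pairwise (· ≤ ·) := Multiset.pairwise_sort _ _
  have hf : f < l.length := by omega
  have hm' : m = l.get ⟨f, hf⟩ := by
    simp [hm, List.getD_eq_getElem l 0 hf, List.get_eq_getElem,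
      List.getElem?_eq_getElem hf]
  have hdrop : ∀ x ∈ l.drop f, m ≤ x := by
    intro x hx
    obtain ⟨k, hk, heq⟩ := List.getElem_of_mem hx
    have hk' : f + k < l.length := by
      simp [List.length_drop] at hk; omega
    have hx' : x = l[f + k] := by rw [← heq, ← List.getElem_drop' hk']
    rw [hx', hm']
    exact hsorted.rel_get_of_le (a := ⟨f, hf⟩) (b := ⟨f + k, hk'⟩) (by simp)
  have hcountl : f + 1 ≤ l.countP (fun x => decide (m ≤ x)) := by
    have h1 : (l.drop f).countP (fun x => decide (m ≤ x)) = (l.drop f).length := by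
      apply List.countP_eq_length.mpr
      intro x hx
      simpa using hdrop x hx
    have h2 : l.countP (fun x => decide (m ≤ x)) =
        (l.take f).countP (fun x => decide (m ≤ x)) +
        (l.drop f).countP (fun x => decide (m ≤ x)) := by
      rw [← List.countP_append, List.take_append_drop]
    rw [h2, h1, List.length_drop, hlen]
    omega
  have hms : f + 1 ≤ Multiset.countP (fun x => m ≤ x) (ι.val.map t) := by
    have hs : (l : Multiset ℝ) = ι.val.map t := Multiset.sort_eq _ _
    rw [← hs, Multiset.coe_countP]
    exact hcountl
  have hfilter : f + 1 ≤ (ι.filter (fun i => m ≤ t i)).card := by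
    rw [Multiset.countP_map] at hms
    convert hms using 2
    rfl
  have hns : ¬ (ι.filter (fun i => m ≤ t i)) ⊆ F := fun h => by
    have := Finset.card_le_card h
    omega
  obtain ⟨j, hj, hjF⟩ := Finset.not_subset.mp hns
  rw [Finset.mem_filter] at hj
  exact ⟨j, hj.1, hjF, hj.2⟩
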